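/- Let Y be a finite nonempty type, Z a measurable space, and λ a σ-finite measure on Z. Let f : Y → Z → ℝ≥0 be a family of measurable density functions with ∫ f_y dλ = 1 for every y, and let p : Y → ℝ≥0 be a label distribution. Suppose there exist labels y₀ ≠ y₁ with p(y₀) > 0 and p(y₁) > 0 whose conditional supports overlap: λ({z | f_{y₀}(z) > 0 ∧ f_{y₁}(z) > 0}) > 0. Then for every measurable hypothesis h : Z → Y, the 0-1 risk is strictly positive: Σ_y p(y) · ∫_{z : h(z) ≠ y} f_y(z) dλ(z) > 0. -/

import Mathlib

open MeasureTheory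

/-- **Proposition 3(a)**: if two classes with positive prior have overlapping conditional
supports, then every measurable hypothesis has strictly positive 0-1 risk. -/
theorem overlapping_supports_positive_risk
    {Y : Type*} [Fintype Y] [Nonempty Y] [MeasurableSpace Y]
    {Z : Type*} [MeasurableSpace Z]
    (lam : Measure Z) [SigmaFinite lam]
    (f : Y → Z → NNReal) (hfm : ∀ y, Measurable (f y))
    (hf1 : ∀ y, ∫⁻ z, (f y z : ENNReal) ∂lam = 1)
    (p : Y → NNReal) (hp : ∑ y, p y = 1)
    (y₀ y₁ : Y) (hy : y₀ ≠ y₁) (hp₀ : 0 < p y₀) (hp₁ : 0 < p y₁)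
    (hoverlap : 0 < lam {z | 0 < f y₀ z ∧ 0 < f y₁ z})
    (h : Z → Y) (hh : Measurable h) :
    0 < ∑ y, (p y : ENNReal) * ∫⁻ z in {z | h z ≠ y}, (f y z : ENNReal) ∂lam := by
  set S : Set Z := {z | 0 < f y₀ z ∧ 0 < f y₁ z} with hS
  have hcover : S ⊆ {z | h z ≠ y₀} ∪ {z | h z ≠ y₁} := by
    intro z _
    by_cases hz : h z = y₀
    · right; simp [hz, hy]
    · left; exact hz
  have hpos : 0 < lam (S ∩ {z | h z ≠ y₀}) ∨ 0 < lam (S ∩ {z | h z ≠ y₁}) := by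
    by_contra hcon
    push_neg at hcon
    obtain ⟨h0, h1⟩ := hcon
    have hle : lam S ≤ lam (S ∩ {z | h z ≠ y₀}) + lam (S ∩ {z | h z ≠ y₁}) := by
      calc lam S ≤ lam ((S ∩ {z | h z ≠ y₀}) ∪ (S ∩ {z | h z ≠ y₁})) := by
            apply measure_mono
            intro z hz
            rcases hcover hz with h' | h'
            · exact Or.inl ⟨hz, h'⟩
            · exact Or.inr ⟨hz, h'⟩
        _ ≤ _ := measure_union_le _ _
    rw [le_zero_iff.mp h0, le_zero_iff.mp h1, add_zero] at hle
    exact absurd (le_zero_iff.mp hle) (ne_of_gt hoverlap)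
  have key : ∀ y : Y, 0 < p y → (∀ z ∈ S, 0 < f y z) → 0 < lam (S ∩ {z | h z ≠ y}) →
      0 < ∑ y', (p y' : ENNReal) * ∫⁻ z in {z | h z ≠ y'}, (f y' z : ENNReal) ∂lam := by
    intro y hpy hyS hTy
    have hint : 0 < ∫⁻ z in {z | h z ≠ y}, (f y z : ENNReal) ∂lam := by
      rw [lintegral_pos_iff_support (by exact (hfm y).coe_nnreal_ennreal)]
      have hsub : S ∩ {z | h z ≠ y} ⊆
          (Function.support fun z => (f y z : ENNReal)) ∩ {z | h z ≠ y} := by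
        intro z hz
        refine ⟨?_, hz.2⟩
        have hfz : 0 < f y z := hyS z hz.1
        exact Function.mem_support.mpr (by exact_mod_cast hfz.ne')
      calc 0 < lam (S ∩ {z | h z ≠ y}) := hTy
        _ ≤ lam ((Function.support fun z => (f y z : ENNReal)) ∩ {z | h z ≠ y}) :=
            measure_mono hsub
        _ ≤ (lam.restrict {z | h z ≠ y}) (Function.support fun z => (f y z : ENNReal)) :=
            Measure.le_restrict_apply _ _
    have hterm : 0 < (p y : ENNReal) * ∫⁻ z in {z | h z ≠ y}, (f y z : ENNReal) ∂lam :=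
      ENNReal.mul_pos (by exact_mod_cast hpy.ne') hint.ne'
    exact lt_of_lt_of_le hterm
      (Finset.single_le_sum (f := fun y' => (p y' : ENNReal) * ∫⁻ z in {z | h z ≠ y'}, (f y' z : ENNReal) ∂lam) (fun _ _ => zero_le) (Finset.mem_univ y))
  rcases hpos with h' | h'
  · exact key y₀ hp₀ (fun z hz => hz.1) h'
  · exact key y₁ hp₁ (fun z hz => hz.2) h'
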